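/- Let A = (a_{ij}) be a 4×4 matrix of nonnegative integers whose first row is (1,0,0,0), with det A = ±1, and suppose that for all j ≠ k in {1,2,3,4} there exists i with a_{ij} > 0 and a_{ik} = 0. Then some permutation of the rows of A equals the identity matrix I₄. -/

import Mathlib

set_option maxRecDepth 100000
set_option maxHeartbeats 1000000

/-- The "bad" cyclic support pattern for 3×3 matrices. -/
def stmt7P1 : Matrix (Fin 3) (Fin 3) Bool :=
  !![true, false, true; true, true, false; false, true, true]

/-- Classification of support patterns satisfying the divisibility condition. -/
lemma stmt7_classify (S : Matrix (Fin 3) (Fin 3) Bool)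
    (h : ∀ j k : Fin 3, j ≠ k → ∃ i, S i j = true ∧ S i k = false) :
    (∃ τ : Equiv.Perm (Fin 3), ∀ i j, S i j = decide (τ i = j)) ∨
    (∃ ρ κ : Equiv.Perm (Fin 3), ∀ i j, S i j = stmt7P1 (ρ i) (κ j)) := by
  revert h; revert S; show ∀ S : Fin 3 → Fin 3 → Bool, _; decide

/-- Core lemma: 3×3 case. -/
lemma stmt7_core (B : Matrix (Fin 3) (Fin 3) ℕ)
    (hdet : (B.map (Nat.cast : ℕ → ℤ)).det = 1 ∨ (B.map (Nat.cast : ℕ → ℤ)).det = -1)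
    (hcond : ∀ j k : Fin 3, j ≠ k → ∃ i : Fin 3, 0 < B i j ∧ B i k = 0) :
    ∃ τ : Equiv.Perm (Fin 3), B.submatrix τ id = 1 := by
  have habs : ((B.map (Nat.cast : ℕ → ℤ)).det).natAbs = 1 := by
    rcases hdet with h | h <;> rw [h] <;> rfl
  set S : Matrix (Fin 3) (Fin 3) Bool := Matrix.of fun i j => decide (0 < B i j) with hS
  have hSpos : ∀ i j, S i j = true ↔ 0 < B i j := by intro i j; simp [hS]
  have hSzero : ∀ i j, S i j = false ↔ B i j = 0 := by
    intro i j; simp [hS]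
  have hScond : ∀ j k : Fin 3, j ≠ k → ∃ i, S i j = true ∧ S i k = false := by
    intro j k hjk
    obtain ⟨i, hp, hz⟩ := hcond j k hjk
    exact ⟨i, (hSpos i j).mpr hp, (hSzero i k).mpr hz⟩
  rcases stmt7_classify S hScond with ⟨τ, hτ⟩ | ⟨ρ, κ, hP⟩
  · -- permutation pattern case
    have hpos : ∀ j, 0 < B (τ.symm j) j := by
      intro j
      refine (hSpos _ _).mp ?_
      rw [hτ]; simp
    have hzero : ∀ i j, τ i ≠ j → B i j = 0 := by
      intro i j hne
      refine (hSzero _ _).mp ?_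
      rw [hτ]; simp [hne]
    have hdiag : B.submatrix τ.symm id = Matrix.diagonal (fun j => B (τ.symm j) j) := by
      ext i j
      by_cases h : i = j
      · subst h; simp [Matrix.submatrix_apply]
      · rw [Matrix.submatrix_apply, Matrix.diagonal_apply_ne _ h, id]
        exact hzero _ _ (by simpa using h)
    have hmap : (B.map (Nat.cast : ℕ → ℤ)).submatrix τ.symm id
        = (Matrix.diagonal (fun j => B (τ.symm j) j)).map (Nat.cast : ℕ → ℤ) := by
      rw [← hdiag]; rfl
    have hdd : ((B.map (Nat.cast : ℕ → ℤ)).submatrix τ.symm id).det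
        = ((Nat.cast : ℕ → ℤ) (∏ j, B (τ.symm j) j)) := by
      rw [hmap, Matrix.diagonal_map (by simp), Matrix.det_diagonal, Nat.cast_prod]
    have hperm := Matrix.det_permute τ.symm (B.map (Nat.cast : ℕ → ℤ))
    have hprod : (∏ j, B (τ.symm j) j) = 1 := by
      have h1 := congrArg Int.natAbs hperm
      rw [hdd] at h1
      simp only [Int.cast_id, Int.natAbs_mul, Int.units_natAbs, one_mul, habs, Int.natAbs_natCast] at h1
      exact h1
    have hone : ∀ j, B (τ.symm j) j = 1 := by
      intro j
      have : B (τ.symm j) j ∣ ∏ j, B (τ.symm j) j :=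
        Finset.dvd_prod_of_mem _ (Finset.mem_univ j)
      rw [hprod] at this
      exact Nat.dvd_one.mp this
    refine ⟨τ.symm, ?_⟩
    rw [hdiag]
    have : (fun j => B (τ.symm j) j) = fun _ => 1 := funext hone
    rw [this, Matrix.diagonal_one]
  · -- bad cyclic pattern case: contradiction with the determinant
    exfalso
    set C : Matrix (Fin 3) (Fin 3) ℤ :=
      (B.map (Nat.cast : ℕ → ℤ)).submatrix ρ.symm κ.symm with hC
    have hCval : ∀ a b, C a b = ((B (ρ.symm a) (κ.symm b) : ℕ) : ℤ) := fun a b => rfl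
    have hCpos : ∀ a b, stmt7P1 a b = true → 0 < C a b := by
      intro a b hp
      rw [hCval]
      have : S (ρ.symm a) (κ.symm b) = true := by
        rw [hP]; simpa using hp
      exact_mod_cast (hSpos _ _).mp this
    have hCzero : ∀ a b, stmt7P1 a b = false → C a b = 0 := by
      intro a b hp
      rw [hCval]
      have : S (ρ.symm a) (κ.symm b) = false := by
        rw [hP]; simpa using hp
      exact_mod_cast (hSzero _ _).mp this
    have hdet2 : (2 : ℤ) ≤ C.det := by
      rw [Matrix.det_fin_three]
      have z1 : C 0 1 = 0 := hCzero 0 1 rfl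
      have z2 : C 1 2 = 0 := hCzero 1 2 rfl
      have z3 : C 2 0 = 0 := hCzero 2 0 rfl
      have p1 : 0 < C 0 0 := hCpos 0 0 rfl
      have p2 : 0 < C 1 1 := hCpos 1 1 rfl
      have p3 : 0 < C 2 2 := hCpos 2 2 rfl
      have p4 : 0 < C 0 2 := hCpos 0 2 rfl
      have p5 : 0 < C 1 0 := hCpos 1 0 rfl
      have p6 : 0 < C 2 1 := hCpos 2 1 rfl
      rw [z1, z2, z3]
      have t1 : 1 ≤ C 0 0 * C 1 1 * C 2 2 := by
        have : 0 < C 0 0 * C 1 1 * C 2 2 := by positivity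
        omega
      have t2 : 1 ≤ C 0 2 * C 1 0 * C 2 1 := by
        have : 0 < C 0 2 * C 1 0 * C 2 1 := by positivity
        omega
      ring_nf
      nlinarith [t1, t2]
    have hCabs : C.det.natAbs = 1 := by
      have e1 : C = ((B.map (Nat.cast : ℕ → ℤ)).submatrix ρ.symm id).submatrix id κ.symm := rfl
      rw [e1, Matrix.det_permute', Matrix.det_permute]
      simp only [Int.cast_id, Int.natAbs_mul, Int.units_natAbs, one_mul, habs]
    omega

/-- A 4×4 nonnegative integer matrix with first row (1,0,0,0), det A = ±1,
satisfying the almost monomial divisibility condition, becomes the identity matrix after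
some permutation of its rows. -/
theorem stmt_7 (A : Matrix (Fin 4) (Fin 4) ℕ)
    (h1 : A 0 0 = 1) (h2 : A 0 1 = 0) (h3 : A 0 2 = 0) (h4 : A 0 3 = 0)
    (hdet : (A.map (Nat.cast : ℕ → ℤ)).det = 1 ∨ (A.map (Nat.cast : ℕ → ℤ)).det = -1)
    (hcond : ∀ j k : Fin 4, j ≠ k → ∃ i : Fin 4, 0 < A i j ∧ A i k = 0) :
    ∃ σ : Equiv.Perm (Fin 4), A.submatrix σ id = 1 := by
  have s0 : ((0 : Fin 3)).succ = (1 : Fin 4) := rfl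
  have s1 : ((1 : Fin 3)).succ = (2 : Fin 4) := rfl
  have s2 : ((2 : Fin 3)).succ = (3 : Fin 4) := rfl
  have hA0 : ∀ j : Fin 3, A 0 j.succ = 0 := by
    intro j; fin_cases j
    · exact h2
    · exact h3
    · exact h4
  set B : Matrix (Fin 3) (Fin 3) ℕ := Matrix.of (fun i j => A i.succ j.succ) with hB
  have hdetB : (A.map (Nat.cast : ℕ → ℤ)).det = (B.map (Nat.cast : ℕ → ℤ)).det := by
    rw [Matrix.det_succ_row_zero, Fin.sum_univ_four]
    simp only [Matrix.map_apply, h1, h2, h3, h4, Nat.cast_one, Nat.cast_zero, mul_zero,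
      zero_mul, mul_one, one_mul, add_zero, zero_add, pow_zero, Fin.val_zero,
      Fin.succAbove_zero]
    rfl
  have hdetB' : (B.map (Nat.cast : ℕ → ℤ)).det = 1 ∨ (B.map (Nat.cast : ℕ → ℤ)).det = -1 := by
    rw [← hdetB]; exact hdet
  have hcondB : ∀ j k : Fin 3, j ≠ k → ∃ i : Fin 3, 0 < B i j ∧ B i k = 0 := by
    intro j k hjk
    obtain ⟨i, hpos, hzero⟩ := hcond j.succ k.succ (by simpa [Fin.succ_inj] using hjk)
    have hi : i ≠ 0 := by
      rintro rfl; rw [hA0 j] at hpos; exact lt_irrefl 0 hpos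
    obtain ⟨i', rfl⟩ := Fin.exists_succ_eq.mpr hi
    exact ⟨i', hpos, hzero⟩
  obtain ⟨τ, hτ⟩ := stmt7_core B hdetB' hcondB
  have hone : ∀ a b : Fin 3, B (τ a) b = if a = b then 1 else 0 := by
    intro a b
    have := congrFun (congrFun hτ a) b
    simpa [Matrix.submatrix_apply, Matrix.one_apply] using this
  have hcol0 : ∀ i' : Fin 3, A (τ i').succ 0 = 0 := by
    intro i'
    obtain ⟨w, hw1, hw2⟩ := hcond i'.succ 0 (Fin.succ_ne_zero i')
    have hwne : w ≠ 0 := by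
      rintro rfl; rw [hA0 i'] at hw1; exact lt_irrefl 0 hw1
    obtain ⟨w', rfl⟩ := Fin.exists_succ_eq.mpr hwne
    have hBw : 0 < B w' i' := hw1
    have heq : τ.symm w' = i' := by
      by_contra hne
      have h := hone (τ.symm w') i'
      rw [Equiv.apply_symm_apply, if_neg hne] at h
      rw [h] at hBw; exact lt_irrefl 0 hBw
    have heq2 : w' = τ i' := by rw [← heq, Equiv.apply_symm_apply]
    rw [← heq2]; exact hw2
  refine ⟨Equiv.Perm.decomposeFin.symm (0, τ), ?_⟩
  ext i j
  induction i using Fin.cases with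
  | zero =>
    simp only [Matrix.submatrix_apply, Equiv.Perm.decomposeFin_symm_apply_zero, id]
    induction j using Fin.cases with
    | zero => rw [h1]; simp [Matrix.one_apply]
    | succ j' =>
      rw [hA0 j', Matrix.one_apply_ne (Ne.symm (Fin.succ_ne_zero j'))]
  | succ i' =>
    simp only [Matrix.submatrix_apply, Equiv.Perm.decomposeFin_symm_apply_succ,
      Equiv.swap_self, Equiv.refl_apply, id]
    induction j using Fin.cases with
    | zero => rw [hcol0 i', Matrix.one_apply_ne (Fin.succ_ne_zero i')]
    | succ j' =>
      have hB' : A (τ i').succ j'.succ = B (τ i') j' := rfl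
      rw [hB', hone i' j', Matrix.one_apply]
      simp [Fin.succ_inj]
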